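/- Let S be a division ring and let a11, a12, a21, a22 ∈ S with a11 ≠ 0 and a21 ≠ 0. Then the two candidate Dieudonné determinants of the 2×2 matrix [[a11,a12],[a21,a22]], namely d1 = a11·a22 − a11·a21·a11^{-1}·a12 and d2 = a21·a11·a21^{-1}·a22 − a21·a12, satisfy d1 = c·d2 for some multiplicative commutator c = a11·a21·a11^{-1}·a21^{-1}; hence they are equal modulo the commutator subgroup [S^×, S^×]. -/
import Mathlib


/-- The two candidate Dieudonné determinants of the 2×2 matrix
`[[a11,a12],[a21,a22]]` over a division ring `S` (with `a11 ≠ 0`, `a21 ≠ 0`),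
namely `d1 = a11·a22 − a11·a21·a11⁻¹·a12` and
`d2 = a21·a11·a21⁻¹·a22 − a21·a12`, differ by the multiplicative commutator
`c = a11·a21·a11⁻¹·a21⁻¹`, hence they are equal modulo the commutator subgroup
`[Sˣ, Sˣ]` (i.e. in the abelianization of `Sˣ`). -/
theorem dieudonne_det_two_by_two_well_defined {S : Type*} [DivisionRing S]
    (a11 a12 a21 a22 : S) (h11 : a11 ≠ 0) (h21 : a21 ≠ 0) :
    (a11 * a22 - a11 * a21 * a11⁻¹ * a12) =
      (a11 * a21 * a11⁻¹ * a21⁻¹) * (a21 * a11 * a21⁻¹ * a22 - a21 * a12) ∧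
    (∃ u v : Sˣ, a11 * a21 * a11⁻¹ * a21⁻¹ = (u : S) * v * (↑u⁻¹ : S) * (↑v⁻¹ : S)) ∧
    (∀ u1 u2 : Sˣ, (u1 : S) = a11 * a22 - a11 * a21 * a11⁻¹ * a12 →
      (u2 : S) = a21 * a11 * a21⁻¹ * a22 - a21 * a12 →
      Abelianization.of u1 = Abelianization.of u2) := by
  have key : (a11 * a22 - a11 * a21 * a11⁻¹ * a12) =
      (a11 * a21 * a11⁻¹ * a21⁻¹) * (a21 * a11 * a21⁻¹ * a22 - a21 * a12) := by
    rw [mul_sub]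
    congr 1
    · rw [show a11 * a21 * a11⁻¹ * a21⁻¹ * (a21 * a11 * a21⁻¹ * a22)
          = a11 * a21 * a11⁻¹ * (a21⁻¹ * a21) * a11 * a21⁻¹ * a22 by simp [mul_assoc],
        inv_mul_cancel₀ h21, mul_one]
      rw [show a11 * a21 * a11⁻¹ * a11 * a21⁻¹ * a22
          = a11 * a21 * (a11⁻¹ * a11) * a21⁻¹ * a22 by simp [mul_assoc],
        inv_mul_cancel₀ h11, mul_one]
      rw [show a11 * a21 * a21⁻¹ * a22 = a11 * (a21 * a21⁻¹) * a22 by simp [mul_assoc],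
        mul_inv_cancel₀ h21, mul_one]
    · rw [show a11 * a21 * a11⁻¹ * a21⁻¹ * (a21 * a12)
          = a11 * a21 * a11⁻¹ * (a21⁻¹ * a21) * a12 by simp [mul_assoc],
        inv_mul_cancel₀ h21, mul_one]
  set u : Sˣ := Units.mk0 a11 h11
  set v : Sˣ := Units.mk0 a21 h21
  have hc : a11 * a21 * a11⁻¹ * a21⁻¹ = (u : S) * v * (↑u⁻¹ : S) * (↑v⁻¹ : S) := by
    simp [u, v]
  refine ⟨key, ⟨u, v, hc⟩, ?_⟩
  intro u1 u2 h1 h2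
  have hu : (u1 : S) = ((u * v * u⁻¹ * v⁻¹ * u2 : Sˣ) : S) := by
    rw [h1, key, hc, Units.val_mul, Units.val_mul, Units.val_mul, Units.val_mul, h2]
  have hu' : u1 = u * v * u⁻¹ * v⁻¹ * u2 := Units.ext hu
  rw [hu']
  simp [map_mul, map_inv]
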